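/- For an integer k ≥ 2, let H be a k-uniform hypergraph with n vertices and p·C(n,k) edges. Then there is an ordering v_1, …, v_n of the vertices such that |e({v_1,…,v_ℓ}) − p·C(ℓ,k)| ≤ max{p, 1−p}·C(n−1,k−1) for all ℓ ∈ {1,…,n}. -/

import Mathlib

open Finset

private lemma aux_filter_erase {n : ℕ} (H : Finset (Finset (Fin n))) (S : Finset (Fin n))
    (v : Fin n) :
    H.filter (· ⊆ S.erase v) = (H.filter (· ⊆ S)).filter (fun e => v ∉ e) := by
  rw [filter_filter]
  apply filter_congr
  intro e _
  simp only [Finset.subset_erase]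

private lemma aux_sum {n k : ℕ} (H : Finset (Finset (Fin n))) (hk : ∀ e ∈ H, e.card = k)
    (S : Finset (Fin n)) :
    ∑ v ∈ S, (H.filter (· ⊆ S.erase v)).card = (S.card - k) * (H.filter (· ⊆ S)).card := by
  calc ∑ v ∈ S, (H.filter (· ⊆ S.erase v)).card
      = ∑ v ∈ S, ((H.filter (· ⊆ S)).filter (fun e => v ∉ e)).card := by
        simp_rw [aux_filter_erase]
    _ = ∑ v ∈ S, ∑ e ∈ H.filter (· ⊆ S), if v ∉ e then 1 else 0 := by
        simp_rw [Finset.card_filter]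
    _ = ∑ e ∈ H.filter (· ⊆ S), ∑ v ∈ S, if v ∉ e then 1 else 0 := Finset.sum_comm
    _ = ∑ _e ∈ H.filter (· ⊆ S), (S.card - k) := by
        refine Finset.sum_congr rfl fun e he => ?_
        obtain ⟨heH, heS⟩ := mem_filter.mp he
        rw [← Finset.card_filter]
        have h2 : S.filter (fun v => v ∉ e) = S \ e := by
          ext x; simp [mem_sdiff]
        rw [h2, card_sdiff_of_subset heS, hk e heH]
    _ = (S.card - k) * (H.filter (· ⊆ S)).card := by
        rw [Finset.sum_const, smul_eq_mul, mul_comm]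

private lemma aux_deg {n k : ℕ} (H : Finset (Finset (Fin n))) (hk : ∀ e ∈ H, e.card = k)
    {S : Finset (Fin n)} {v : Fin n} (hv : v ∈ S) :
    (H.filter (· ⊆ S)).card ≤ (H.filter (· ⊆ S.erase v)).card + (S.card - 1).choose (k - 1) := by
  have hsplit := Finset.card_filter_add_card_filter_not
    (s := H.filter (· ⊆ S)) (p := fun e => v ∉ e)
  have h2 : ((H.filter (· ⊆ S)).filter (fun e => ¬ v ∉ e)).card ≤ (S.card - 1).choose (k - 1) := by
    have hmaps : ∀ e ∈ (H.filter (· ⊆ S)).filter (fun e => ¬ v ∉ e),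
        e.erase v ∈ (S.erase v).powersetCard (k - 1) := by
      intro e he
      obtain ⟨he1, hve⟩ := mem_filter.mp he
      obtain ⟨heH, heS⟩ := mem_filter.mp he1
      rw [not_not] at hve
      rw [mem_powersetCard]
      exact ⟨erase_subset_erase v heS, by rw [card_erase_of_mem hve, hk e heH]⟩
    have hinj : Set.InjOn (fun e : Finset (Fin n) => e.erase v)
        (((H.filter (· ⊆ S)).filter (fun e => ¬ v ∉ e) : Finset (Finset (Fin n))) :
          Set (Finset (Fin n))) := by
      intro e1 h1 e2 h2 h
      simp only [coe_filter, Set.mem_setOf_eq, not_not] at h1 h2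
      have h3 := congrArg (insert v) h
      simp only at h3
      rwa [insert_erase h1.2, insert_erase h2.2] at h3
    have := Finset.card_le_card_of_injOn (fun e : Finset (Fin n) => e.erase v) hmaps hinj
    rwa [Finset.card_powersetCard, card_erase_of_mem hv] at this
  rw [aux_filter_erase]
  omega

private lemma aux_mono {n : ℕ} (H : Finset (Finset (Fin n))) {S T : Finset (Fin n)} (h : S ⊆ T) :
    (H.filter (· ⊆ S)).card ≤ (H.filter (· ⊆ T)).card :=
  Finset.card_le_card (Finset.monotone_filter_right _ (fun _ _ he => he.trans h))

private def good {n : ℕ} (H : Finset (Finset (Fin n))) (k : ℕ) (p : ℝ) (S : Finset (Fin n)) :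
    Prop :=
  -((1 - p) * ((n - 1).choose (k - 1) : ℝ)) ≤
      ((H.filter (· ⊆ S)).card : ℝ) - p * (S.card.choose k : ℝ) ∧
    ((H.filter (· ⊆ S)).card : ℝ) - p * (S.card.choose k : ℝ) ≤ p * ((n - 1).choose (k - 1) : ℝ)

private lemma step_lemma {n k : ℕ} (hk1 : 1 ≤ k) (H : Finset (Finset (Fin n)))
    (hk : ∀ e ∈ H, e.card = k) (p : ℝ) (hp0 : 0 ≤ p) (hp1 : p ≤ 1)
    {S : Finset (Fin n)} (hS : S.Nonempty) (hgood : good H k p S) :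
    ∃ v ∈ S, good H k p (S.erase v) := by
  unfold good at hgood
  obtain ⟨hlo, hhi⟩ := hgood
  have hm1 : 1 ≤ S.card := Finset.card_pos.mpr hS
  have hmn : S.card ≤ n := le_trans (Finset.card_le_univ S) (by simp)
  have hC0M : ((S.card - 1).choose (k - 1) : ℝ) ≤ ((n - 1).choose (k - 1) : ℝ) :=
    Nat.cast_le.mpr (Nat.choose_le_choose (k - 1) (by omega))
  have hM0 : (0 : ℝ) ≤ ((n - 1).choose (k - 1) : ℝ) := Nat.cast_nonneg _
  have hqM : (0 : ℝ) ≤ (1 - p) * ((n - 1).choose (k - 1) : ℝ) :=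
    mul_nonneg (by linarith) hM0
  have hpM : (0 : ℝ) ≤ p * ((n - 1).choose (k - 1) : ℝ) := mul_nonneg hp0 hM0
  have hchN : (S.card - 1).choose k * S.card = S.card.choose k * (S.card - k) := by
    have h := Nat.choose_mul_succ_eq (S.card - 1) k
    have hm' : S.card - 1 + 1 = S.card := by omega
    rwa [hm'] at h
  have hch : ((S.card - 1).choose k : ℝ) * (S.card : ℝ)
      = (S.card.choose k : ℝ) * ((S.card - k : ℕ) : ℝ) := by exact_mod_cast hchN
  have hchp : p * (((S.card - 1).choose k : ℝ) * (S.card : ℝ))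
      = p * ((S.card.choose k : ℝ) * ((S.card - k : ℕ) : ℝ)) := by rw [hch]
  have hpasN : S.card.choose k = (S.card - 1).choose (k - 1) + (S.card - 1).choose k := by
    have h := Nat.choose_succ_succ (S.card - 1) (k - 1)
    have hm' : (S.card - 1).succ = S.card := by omega
    have hk' : (k - 1).succ = k := by omega
    rwa [hm', hk'] at h
  have h3' : p * (S.card.choose k : ℝ)
      = p * (((S.card - 1).choose (k - 1) : ℝ)) + p * (((S.card - 1).choose k : ℝ)) := by
    have h : (S.card.choose k : ℝ)
        = ((S.card - 1).choose (k - 1) : ℝ) + ((S.card - 1).choose k : ℝ) := by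
      exact_mod_cast hpasN
    rw [h]; ring
  have h4 : ((S.card - k : ℕ) : ℝ) ≤ (S.card : ℝ) := by exact_mod_cast Nat.sub_le S.card k
  have h5 : (0 : ℝ) ≤ ((S.card - k : ℕ) : ℝ) := Nat.cast_nonneg _
  have h6 : (0 : ℝ) < (S.card : ℝ) := by exact_mod_cast hm1
  have hsum := aux_sum H hk S
  rcases le_or_gt 0 (((H.filter (· ⊆ S)).card : ℝ) - p * (S.card.choose k : ℝ)) with hpos | hneg
  · obtain ⟨v, hv, hle⟩ : ∃ v ∈ S,
        S.card * (H.filter (· ⊆ S.erase v)).card ≤ (S.card - k) * (H.filter (· ⊆ S)).card := by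
      by_contra hcon
      push_neg at hcon
      have h7 : ∑ _v ∈ S, (S.card - k) * (H.filter (· ⊆ S)).card <
          ∑ v ∈ S, S.card * (H.filter (· ⊆ S.erase v)).card :=
        Finset.sum_lt_sum_of_nonempty hS (fun v hv => hcon v hv)
      rw [Finset.sum_const, smul_eq_mul, ← Finset.mul_sum, hsum] at h7
      exact absurd h7 (lt_irrefl _)
    have h1 : (S.card : ℝ) * ((H.filter (· ⊆ S.erase v)).card : ℝ)
        ≤ ((S.card - k : ℕ) : ℝ) * ((H.filter (· ⊆ S)).card : ℝ) := by exact_mod_cast hle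
    have hdeg : ((H.filter (· ⊆ S)).card : ℝ)
        ≤ ((H.filter (· ⊆ S.erase v)).card : ℝ) + ((S.card - 1).choose (k - 1) : ℝ) := by
      exact_mod_cast aux_deg H hk hv
    refine ⟨v, hv, ?_, ?_⟩ <;> rw [card_erase_of_mem hv]
    · -- lower bound
      have t3 : (1 - p) * ((S.card - 1).choose (k - 1) : ℝ)
          ≤ (1 - p) * ((n - 1).choose (k - 1) : ℝ) :=
        mul_le_mul_of_nonneg_left hC0M (by linarith)
      linarith [hdeg, hpos, t3, h3']
    · -- upper bound
      have f2 : ((S.card - k : ℕ) : ℝ) *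
            (((H.filter (· ⊆ S)).card : ℝ) - p * (S.card.choose k : ℝ))
          ≤ ((S.card - k : ℕ) : ℝ) * (p * ((n - 1).choose (k - 1) : ℝ)) :=
        mul_le_mul_of_nonneg_left hhi h5
      have f3 : (0 : ℝ) ≤ ((S.card : ℝ) - ((S.card - k : ℕ) : ℝ)) *
          (p * ((n - 1).choose (k - 1) : ℝ)) :=
        mul_nonneg (by linarith) hpM
      have key : (S.card : ℝ) *
            (((H.filter (· ⊆ S.erase v)).card : ℝ) - p * (((S.card - 1).choose k : ℝ)))
          ≤ (S.card : ℝ) * (p * ((n - 1).choose (k - 1) : ℝ)) := by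
        linarith [h1, hchp, f2, f3]
      exact le_of_mul_le_mul_left key h6
  · obtain ⟨v, hv, hle⟩ : ∃ v ∈ S,
        (S.card - k) * (H.filter (· ⊆ S)).card ≤ S.card * (H.filter (· ⊆ S.erase v)).card := by
      by_contra hcon
      push_neg at hcon
      have h7 : ∑ v ∈ S, S.card * (H.filter (· ⊆ S.erase v)).card <
          ∑ _v ∈ S, (S.card - k) * (H.filter (· ⊆ S)).card :=
        Finset.sum_lt_sum_of_nonempty hS (fun v hv => hcon v hv)
      rw [Finset.sum_const, smul_eq_mul, ← Finset.mul_sum, hsum] at h7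
      exact absurd h7 (lt_irrefl _)
    have h1 : ((S.card - k : ℕ) : ℝ) * ((H.filter (· ⊆ S)).card : ℝ)
        ≤ (S.card : ℝ) * ((H.filter (· ⊆ S.erase v)).card : ℝ) := by exact_mod_cast hle
    have hmon : ((H.filter (· ⊆ S.erase v)).card : ℝ) ≤ ((H.filter (· ⊆ S)).card : ℝ) := by
      exact_mod_cast aux_mono H (erase_subset v S)
    refine ⟨v, hv, ?_, ?_⟩ <;> rw [card_erase_of_mem hv]
    · -- lower bound
      have f2 : ((S.card - k : ℕ) : ℝ) * (-((1 - p) * ((n - 1).choose (k - 1) : ℝ)))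
          ≤ ((S.card - k : ℕ) : ℝ) *
            (((H.filter (· ⊆ S)).card : ℝ) - p * (S.card.choose k : ℝ)) :=
        mul_le_mul_of_nonneg_left hlo h5
      have f3 : (0 : ℝ) ≤ ((S.card : ℝ) - ((S.card - k : ℕ) : ℝ)) *
          ((1 - p) * ((n - 1).choose (k - 1) : ℝ)) :=
        mul_nonneg (by linarith) hqM
      have key : (S.card : ℝ) * (-((1 - p) * ((n - 1).choose (k - 1) : ℝ)))
          ≤ (S.card : ℝ) *
            (((H.filter (· ⊆ S.erase v)).card : ℝ) - p * (((S.card - 1).choose k : ℝ))) := by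
        linarith [h1, hchp, f2, f3]
      exact le_of_mul_le_mul_left key h6
    · -- upper bound
      have t3 : p * ((S.card - 1).choose (k - 1) : ℝ) ≤ p * ((n - 1).choose (k - 1) : ℝ) :=
        mul_le_mul_of_nonneg_left hC0M hp0
      linarith [hmon, hneg.le, t3, h3']

theorem stmt_11 (k n : ℕ) (hk2 : 2 ≤ k) (H : Finset (Finset (Fin n)))
    (hk : ∀ e ∈ H, e.card = k) (p : ℝ)
    (hp : p = (H.card : ℝ) / (n.choose k)) :
    ∃ σ : Equiv.Perm (Fin n), ∀ ℓ : ℕ, 1 ≤ ℓ → ℓ ≤ n →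
      |((H.filter (fun e => e ⊆ (Finset.univ.filter (fun i : Fin n => (i : ℕ) < ℓ)).image σ)).card : ℝ)
          - p * (ℓ.choose k)| ≤ max p (1 - p) * ((n - 1).choose (k - 1)) := by
  have hk1 : 1 ≤ k := by omega
  have hp0 : 0 ≤ p := by
    rw [hp]; positivity
  have hp1 : p ≤ 1 := by
    by_cases h : n.choose k = 0
    · rw [hp, h]; simp
    · rw [hp]
      rw [div_le_one (by exact_mod_cast Nat.pos_of_ne_zero h)]
      have hsub : H ⊆ (univ : Finset (Fin n)).powersetCard k := by
        intro e he
        exact mem_powersetCard.mpr ⟨subset_univ e, hk e he⟩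
      have h2 := Finset.card_le_card hsub
      rw [Finset.card_powersetCard, card_univ, Fintype.card_fin] at h2
      exact_mod_cast h2
  have hM0 : (0 : ℝ) ≤ ((n - 1).choose (k - 1) : ℝ) := Nat.cast_nonneg _
  have hgu : good H k p (univ : Finset (Fin n)) := by
    have hfilter : H.filter (· ⊆ (univ : Finset (Fin n))) = H :=
      Finset.filter_true_of_mem (fun e _ => subset_univ e)
    have hz : ((H.card : ℝ)) - p * (n.choose k : ℝ) = 0 := by
      by_cases h : n.choose k = 0
      · have hnk : n < k := Nat.choose_eq_zero_iff.mp h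
        have hH : H = ∅ := by
          ext e
          simp only [Finset.notMem_empty, iff_false]
          intro he
          have h1 := hk e he
          have h2 : e.card ≤ n := le_trans (Finset.card_le_univ e) (by simp)
          omega
        rw [hH, h]
        simp
      · rw [hp, div_mul_cancel₀]
        · ring
        · exact_mod_cast h
    unfold good
    constructor
    · rw [hfilter, card_univ, Fintype.card_fin, hz]
      have h : (0 : ℝ) ≤ (1 - p) * ((n - 1).choose (k - 1) : ℝ) := mul_nonneg (by linarith) hM0
      linarith
    · rw [hfilter, card_univ, Fintype.card_fin, hz]
      exact mul_nonneg hp0 hM0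
  have hchain : ∀ t, t ≤ n → ∃ c : ℕ → Finset (Fin n),
      (∀ j, j < t → c (j + 1) ⊆ c j) ∧
      (∀ j, j ≤ t → (c j).card = n - j ∧ good H k p (c j)) := by
    intro t
    induction t with
    | zero =>
      intro _
      refine ⟨fun _ => univ, fun j hj => absurd hj (by omega), fun j hj => ?_⟩
      have hj0 : j = 0 := by omega
      subst hj0
      exact ⟨by simp, hgu⟩
    | succ t ih =>
      intro ht
      obtain ⟨c, hc1, hc2⟩ := ih (by omega)
      have hct := hc2 t le_rfl
      have hne : (c t).Nonempty := by
        rw [← Finset.card_pos, hct.1]; omega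
      obtain ⟨v, hv, hgood'⟩ := step_lemma hk1 H hk p hp0 hp1 hne hct.2
      refine ⟨fun j => if j ≤ t then c j else (c t).erase v, ?_, ?_⟩
      · intro j hj
        by_cases hjt : j < t
        · simp only [if_pos (le_of_lt hjt), if_pos (by omega : j + 1 ≤ t)]
          exact hc1 j hjt
        · have hjt' : j = t := by omega
          subst hjt'
          simp only [if_neg (by omega : ¬ j + 1 ≤ j), if_pos le_rfl]
          exact erase_subset v (c j)
      · intro j hj
        by_cases hjt : j ≤ t
        · simp only [if_pos hjt]; exact hc2 j hjt
        · have hjt' : j = t + 1 := by omega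
          subst hjt'
          simp only [if_neg (by omega : ¬ t + 1 ≤ t)]
          refine ⟨?_, hgood'⟩
          rw [card_erase_of_mem hv, hct.1]
          omega
  obtain ⟨c, hc1, hc2⟩ := hchain n le_rfl
  set Sf : ℕ → Finset (Fin n) := fun ℓ => c (n - ℓ) with hSf
  have hScard : ∀ ℓ, ℓ ≤ n → (Sf ℓ).card = ℓ := by
    intro ℓ hℓ
    have h := (hc2 (n - ℓ) (by omega)).1
    show (c (n - ℓ)).card = ℓ
    omega
  have hSgood : ∀ ℓ, ℓ ≤ n → good H k p (Sf ℓ) := fun ℓ hℓ => (hc2 (n - ℓ) (by omega)).2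
  have hSstep : ∀ ℓ, ℓ < n → Sf ℓ ⊆ Sf (ℓ + 1) := by
    intro ℓ hℓ
    have e1 : n - ℓ - 1 + 1 = n - ℓ := by omega
    have e2 : n - (ℓ + 1) = n - ℓ - 1 := by omega
    have h := hc1 (n - ℓ - 1) (by omega)
    rw [e1] at h
    show c (n - ℓ) ⊆ c (n - (ℓ + 1))
    rw [e2]
    exact h
  have hmono : ∀ a b : ℕ, a ≤ b → b ≤ n → Sf a ⊆ Sf b := by
    intro a b hab
    induction b, hab using Nat.le_induction with
    | base => intro _; exact subset_rfl
    | succ b hab ih =>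
      intro hbn
      exact (ih (by omega)).trans (hSstep b (by omega))
  rcases Nat.eq_zero_or_pos n with hn0 | hn
  · subst hn0
    exact ⟨Equiv.refl _, fun ℓ h1 h2 => by omega⟩
  have hτex : ∀ i : Fin n, ∃ a : Fin n, Sf ((i : ℕ) + 1) \ Sf (i : ℕ) = {a} := by
    intro i
    have hsub : Sf (i : ℕ) ⊆ Sf ((i : ℕ) + 1) := hSstep _ i.isLt
    have hcard : (Sf ((i : ℕ) + 1) \ Sf (i : ℕ)).card = 1 := by
      rw [card_sdiff_of_subset hsub, hScard _ (Nat.succ_le_of_lt i.isLt), hScard _ (le_of_lt i.isLt)]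
      omega
    exact Finset.card_eq_one.mp hcard
  choose τ hτ using hτex
  have hmem : ∀ i : Fin n, τ i ∈ Sf ((i : ℕ) + 1) ∧ τ i ∉ Sf (i : ℕ) := by
    intro i
    have h : τ i ∈ Sf ((i : ℕ) + 1) \ Sf (i : ℕ) := by
      rw [hτ i]; exact mem_singleton_self _
    exact mem_sdiff.mp h
  have hinj : Function.Injective τ := by
    intro a b hab
    rcases Nat.lt_trichotomy (a : ℕ) (b : ℕ) with h | h | h
    · have h1 : τ a ∈ Sf (b : ℕ) := hmono ((a : ℕ) + 1) (b : ℕ) (by omega) (le_of_lt b.isLt)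
        (hmem a).1
      rw [hab] at h1
      exact absurd h1 (hmem b).2
    · exact Fin.ext h
    · have h1 : τ b ∈ Sf (a : ℕ) := hmono ((b : ℕ) + 1) (a : ℕ) (by omega) (le_of_lt a.isLt)
        (hmem b).1
      rw [← hab] at h1
      exact absurd h1 (hmem a).2
  refine ⟨Equiv.ofBijective τ (Finite.injective_iff_bijective.mp hinj), ?_⟩
  intro ℓ h1ℓ hℓn
  have hfc : ((univ : Finset (Fin n)).filter (fun i : Fin n => (i : ℕ) < ℓ)).card = ℓ := by
    have himg : ((univ : Finset (Fin n)).filter (fun i : Fin n => (i : ℕ) < ℓ)).image Fin.val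
        = Finset.range ℓ := by
      ext j
      simp only [Finset.mem_image, Finset.mem_filter, Finset.mem_univ, true_and,
        Finset.mem_range]
      constructor
      · rintro ⟨i, hi, rfl⟩; exact hi
      · intro hj; exact ⟨⟨j, by omega⟩, hj, rfl⟩
    calc ((univ : Finset (Fin n)).filter (fun i : Fin n => (i : ℕ) < ℓ)).card
        = (((univ : Finset (Fin n)).filter (fun i : Fin n => (i : ℕ) < ℓ)).image Fin.val).card :=
          (Finset.card_image_of_injective _ Fin.val_injective).symm
      _ = ℓ := by rw [himg, Finset.card_range]
  have himgS : ((univ : Finset (Fin n)).filter (fun i : Fin n => (i : ℕ) < ℓ)).image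
      (Equiv.ofBijective τ (Finite.injective_iff_bijective.mp hinj)) = Sf ℓ := by
    apply Finset.eq_of_subset_of_card_le
    · intro x hx
      obtain ⟨i, hi, rfl⟩ := Finset.mem_image.mp hx
      have hi' : (i : ℕ) < ℓ := (Finset.mem_filter.mp hi).2
      show τ i ∈ Sf ℓ
      exact hmono ((i : ℕ) + 1) ℓ (by omega) hℓn (hmem i).1
    · rw [Finset.card_image_of_injective _
        (Equiv.ofBijective τ (Finite.injective_iff_bijective.mp hinj)).injective,
        hScard ℓ hℓn, hfc]
  rw [himgS]
  have hg := hSgood ℓ hℓn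
  unfold good at hg
  obtain ⟨hlo, hhi⟩ := hg
  rw [hScard ℓ hℓn] at hlo hhi
  rw [abs_le]
  constructor
  · have h : (1 - p) * ((n - 1).choose (k - 1) : ℝ) ≤
        max p (1 - p) * ((n - 1).choose (k - 1) : ℝ) :=
      mul_le_mul_of_nonneg_right (le_max_right _ _) hM0
    linarith
  · exact hhi.trans (mul_le_mul_of_nonneg_right (le_max_left _ _) hM0)
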